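/- Let K be a simple graph on vertex set [n] and let H(K) be its conflict graph. Then the minimum size of a vertex cover of H(K) equals 2|E(K)| − maxcut(K), where maxcut(K) is the maximum of cut_K(s) over all total assignments s : [n] → {0,1}. -/

import Mathlib

/-- A vertex of the conflict graph of `K`: a pair `(e, b)` where `e = {i,j}` is an edge
of `K` with `i < j` and `b ∈ {0,1}`, encoded as the triple `(i, j, b)`; it represents
the partial assignment `x_i = b`, `x_j = ¬b`. -/
def ConflictVertex (n : ℕ) (K : SimpleGraph (Fin n)) : Type :=
  {p : Fin n × Fin n × Bool // p.1 < p.2.1 ∧ K.Adj p.1 p.2.1}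

/-- The partial assignment associated to a conflict-graph vertex. -/
def assigns {n : ℕ} {K : SimpleGraph (Fin n)} (v : ConflictVertex n K) (x : Fin n) :
    Option Bool :=
  if x = v.val.1 then some v.val.2.2
  else if x = v.val.2.1 then some (!v.val.2.2) else none

/-- The conflict graph `H(K)`: two distinct partial assignments are adjacent iff they
assign different values to some common variable. -/
def conflictGraph (n : ℕ) (K : SimpleGraph (Fin n)) : SimpleGraph (ConflictVertex n K) :=
  SimpleGraph.fromRel (fun v w => ∃ (x : Fin n) (b c : Bool),
    assigns v x = some b ∧ assigns w x = some c ∧ b ≠ c)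

/-- `cut_K(s)`: the number of edges `{i,j}` of `K` with `s i ≠ s j`. -/
def cutK (n : ℕ) (K : SimpleGraph (Fin n)) [DecidableRel K.Adj] (s : Fin n → Bool) : ℕ :=
  (K.edgeFinset.filter (fun e => ¬ (e.map s).IsDiag)).card

/-- `maxcut(K)`: the maximum of `cut_K(s)` over all total assignments `s`. -/
def maxcutK (n : ℕ) (K : SimpleGraph (Fin n)) [DecidableRel K.Adj] : ℕ :=
  Finset.univ.sup (fun s : Fin n → Bool => cutK n K s)

section Aux
set_option linter.unusedSectionVars false
variable {n : ℕ} {K : SimpleGraph (Fin n)} [DecidableRel K.Adj]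

instance : DecidableEq (ConflictVertex n K) := by unfold ConflictVertex; infer_instance
instance : Fintype (ConflictVertex n K) := by unfold ConflictVertex; infer_instance

/-- vertices consistent with total assignment `s` -/
def Iset (K : SimpleGraph (Fin n)) [DecidableRel K.Adj] (s : Fin n → Bool) :
    Finset (ConflictVertex n K) :=
  Finset.univ.filter (fun v => s v.val.1 = v.val.2.2 ∧ s v.val.2.1 = !v.val.2.2)

lemma assigns_fst (v : ConflictVertex n K) : assigns v v.val.1 = some v.val.2.2 := by
  simp [assigns]

lemma assigns_snd (v : ConflictVertex n K) : assigns v v.val.2.1 = some (!v.val.2.2) := by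
  have : v.val.2.1 ≠ v.val.1 := (ne_of_lt v.2.1).symm
  simp [assigns, this]

lemma mem_Iset_consistent {s : Fin n → Bool} {v : ConflictVertex n K} (hv : v ∈ Iset K s)
    {x : Fin n} {b : Bool} (hx : assigns v x = some b) : s x = b := by
  simp only [Iset, Finset.mem_filter] at hv
  unfold assigns at hx
  split_ifs at hx with h1 h2 <;> simp_all

lemma card_Iset (s : Fin n → Bool) : (Iset K s).card = cutK n K s := by
  classical
  apply Finset.card_bij (fun v _ => Sym2.mk v.val.1 v.val.2.1)
  · intro v hv
    simp only [Iset, Finset.mem_filter] at hv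
    simp only [Finset.mem_filter, SimpleGraph.mem_edgeFinset, SimpleGraph.mem_edgeSet]
    refine ⟨v.2.2, ?_⟩
    simp only [Sym2.map_pair_eq, Sym2.mk_isDiag_iff]
    rw [hv.2.1, hv.2.2]
    simp
  · intro v hv w hw h
    simp only [Iset, Finset.mem_filter] at hv hw
    rw [Sym2.eq_iff] at h
    have hvw : v.val.1 = w.val.1 ∧ v.val.2.1 = w.val.2.1 := by
      rcases h with h | h
      · exact h
      · exfalso
        have h1 := v.2.1
        have h2 := w.2.1
        rw [h.1, h.2] at h1
        exact absurd h1 (not_lt.mpr h2.le)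
    obtain ⟨h1, h2⟩ := hvw
    have hb : v.val.2.2 = w.val.2.2 := by
      rw [← hv.2.1, ← hw.2.1, h1]
    apply Subtype.ext
    exact Prod.ext h1 (Prod.ext h2 hb)
  · intro e he
    simp only [Finset.mem_filter, SimpleGraph.mem_edgeFinset, SimpleGraph.mem_edgeSet] at he
    induction e using Sym2.ind with
    | _ i j =>
      obtain ⟨hadj, hdiag⟩ := he
      rw [Sym2.map_pair_eq, Sym2.mk_isDiag_iff] at hdiag
      have hne : i ≠ j := hadj.ne
      rcases lt_or_gt_of_ne hne with hlt | hlt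
      · have hmem : (⟨(i, j, s i), ⟨hlt, hadj⟩⟩ : ConflictVertex n K) ∈ Iset K s := by
          refine Finset.mem_filter.mpr ⟨Finset.mem_univ _, ?_⟩
          cases h1 : s i <;> cases h2 : s j <;> simp_all
        exact ⟨_, hmem, rfl⟩
      · have hmem : (⟨(j, i, s j), ⟨hlt, hadj.symm⟩⟩ : ConflictVertex n K) ∈ Iset K s := by
          refine Finset.mem_filter.mpr ⟨Finset.mem_univ _, ?_⟩
          cases h1 : s i <;> cases h2 : s j <;> simp_all
        exact ⟨_, hmem, Sym2.eq_swap⟩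

lemma card_conflictVertex : Fintype.card (ConflictVertex n K) = 2 * K.edgeFinset.card := by
  classical
  have : (Finset.univ : Finset (ConflictVertex n K)).card
      = (K.edgeFinset ×ˢ (Finset.univ : Finset Bool)).card := by
    apply Finset.card_bij (fun v _ => (Sym2.mk v.val.1 v.val.2.1, v.val.2.2))
    · intro v _
      simp [SimpleGraph.mem_edgeFinset, SimpleGraph.mem_edgeSet, v.2.2]
    · intro v _ w _ h
      rw [Prod.ext_iff] at h
      obtain ⟨h1, h2⟩ := h
      rw [Sym2.eq_iff] at h1
      have hvw : v.val.1 = w.val.1 ∧ v.val.2.1 = w.val.2.1 := by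
        rcases h1 with h | h
        · exact h
        · exfalso
          have ha := v.2.1
          have hb := w.2.1
          rw [h.1, h.2] at ha
          exact absurd ha (not_lt.mpr hb.le)
      apply Subtype.ext
      exact Prod.ext hvw.1 (Prod.ext hvw.2 h2)
    · rintro ⟨e, b⟩ he
      simp only [Finset.mem_product, SimpleGraph.mem_edgeFinset, SimpleGraph.mem_edgeSet] at he
      induction e using Sym2.ind with
      | _ i j =>
        have hadj := he.1
        have hne : i ≠ j := hadj.ne
        rcases lt_or_gt_of_ne hne with hlt | hlt
        · exact ⟨⟨(i, j, b), ⟨hlt, hadj⟩⟩, Finset.mem_univ _, rfl⟩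
        · exact ⟨⟨(j, i, b), ⟨hlt, hadj.symm⟩⟩, Finset.mem_univ _,
            by simp [Prod.ext_iff, Sym2.eq_swap]⟩
  rw [← Finset.card_univ, this, Finset.card_product, Finset.card_univ, Fintype.card_bool]
  ring

end Aux

/-- min vertex cover -/
theorem min_vertexCover_conflictGraph (n : ℕ) (K : SimpleGraph (Fin n))
    [DecidableRel K.Adj] :
    IsLeast {c : ℕ | ∃ S : Finset (ConflictVertex n K),
        (∀ v w : ConflictVertex n K, (conflictGraph n K).Adj v w → v ∈ S ∨ w ∈ S) ∧
        S.card = c}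
      (2 * K.edgeFinset.card - maxcutK n K) := by
  classical
  constructor
  · -- membership: take s achieving the max cut
    obtain ⟨s, -, hs⟩ := Finset.exists_mem_eq_sup (Finset.univ : Finset (Fin n → Bool))
      Finset.univ_nonempty (fun s => cutK n K s)
    refine ⟨(Iset K s)ᶜ, ?_, ?_⟩
    · intro v w hadj
      by_contra hc
      push_neg at hc
      obtain ⟨hv, hw⟩ := hc
      simp only [Finset.mem_compl, not_not] at hv hw
      rw [conflictGraph, SimpleGraph.fromRel_adj] at hadj
      obtain ⟨-, h | h⟩ := hadj <;>
        · obtain ⟨x, b, c, h1, h2, hbc⟩ := h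
          first
          | exact hbc ((mem_Iset_consistent hv h1).symm.trans (mem_Iset_consistent hw h2))
          | exact hbc ((mem_Iset_consistent hw h1).symm.trans (mem_Iset_consistent hv h2))
    · rw [Finset.card_compl, card_Iset, card_conflictVertex, maxcutK, hs]
  · rintro c ⟨S, hcov, rfl⟩
    set s : Fin n → Bool := fun x => decide (∃ v ∈ Sᶜ, assigns v x = some true) with hsdef
    have hcons : ∀ v ∈ Sᶜ, ∀ x b, assigns v x = some b → s x = b := by
      intro v hv x b hxb
      cases b with
      | true =>
        have : ∃ v ∈ Sᶜ, assigns v x = some true := ⟨v, hv, hxb⟩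
        simp only [hsdef, decide_eq_true_eq]
        exact this
      | false =>
        by_contra hfalse
        have hst : s x = true := by cases hsx : s x <;> simp_all
        rw [hsdef] at hst
        simp only [decide_eq_true_eq] at hst
        obtain ⟨w, hw, hwx⟩ := hst
        have hne : v ≠ w := by
          rintro rfl
          rw [hxb] at hwx
          exact Bool.false_ne_true (Option.some_injective _ hwx)
        have hadj : (conflictGraph n K).Adj v w := by
          rw [conflictGraph, SimpleGraph.fromRel_adj]
          exact ⟨hne, Or.inl ⟨x, false, true, hxb, hwx, Bool.false_ne_true⟩⟩
        rcases hcov v w hadj with h | h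
        · exact (Finset.mem_compl.mp hv) h
        · exact (Finset.mem_compl.mp hw) h
    have hsub : Sᶜ ⊆ Iset K s := by
      intro v hv
      simp only [Iset, Finset.mem_filter, Finset.mem_univ, true_and]
      exact ⟨hcons v hv _ _ (assigns_fst v), hcons v hv _ _ (assigns_snd v)⟩
    have h1 : Sᶜ.card ≤ maxcutK n K := by
      calc Sᶜ.card ≤ (Iset K s).card := Finset.card_le_card hsub
        _ = cutK n K s := card_Iset s
        _ ≤ maxcutK n K := Finset.le_sup (Finset.mem_univ s)
    have h2 : S.card + Sᶜ.card = 2 * K.edgeFinset.card := by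
      rw [Finset.card_add_card_compl, card_conflictVertex]
    omega
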